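/- Let k be an infinite field and R a semi-local essentially smooth k-algebra which is a domain with fraction field K and maximal ideals p_1, …, p_r. Let A be a commutative R[t]-algebra which is smooth as an R-algebra and finite as an R[t]-module, with each A/p_iA equi-dimensional of dimension 1 over R/p_i; let ε : A → R be an R-algebra homomorphism with kernel I, and let f ∈ A satisfy ε(f) ≠ 0 with A/fA a finite R-module. Let u ∈ A satisfy: (1) A is a finite projective R[X]-module via ι_u; (2) uA = I ∩ J and I + J = A for some ideal J ⊆ A; (3) J + fA = A; (4) (u−1)A + fA = A. Set A_K = K ⊗_R A; then A_K is a finite free K[X]-module via X ↦ u, and the norm N(f) = N_{A_K/K[u]}(f) ∈ K[X], i.e. the determinant of multiplication by f on the K[X]-module A_K, does not vanish at the points 0 and 1 of the affine line: the evaluations of N(f) at X = 0 and at X = 1 are both nonzero elements of K. -/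

import Mathlib

/-- A projective module over a domain is torsion-free. -/
theorem aux_projective_noZeroSMulDivisors {R M : Type*} [CommRing R] [IsDomain R]
    [AddCommGroup M] [Module R M] (h : Module.Projective R M) :
    NoZeroSMulDivisors R M := by
  obtain ⟨s, hs⟩ := Module.projective_def.mp h
  refine ⟨fun {c x} hcx => ?_⟩
  by_cases hc : c = 0
  · exact Or.inl hc
  · refine Or.inr ?_
    have h1 : c • s x = 0 := by rw [← map_smul, hcx, map_zero]
    have h2 : s x = 0 := by
      ext i
      have h3 := DFunLike.congr_fun h1 i
      rw [Finsupp.smul_apply, smul_eq_mul, Finsupp.zero_apply] at h3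
      exact (mul_eq_zero.mp h3).resolve_left hc
    have h4 := hs x
    rw [h2, map_zero] at h4
    exact h4.symm

set_option maxHeartbeats 2000000 in
set_option synthInstance.maxHeartbeats 400000 in
/-- Under the setting of Statement 6 with `R` a domain with fraction field `K`,
let `u ∈ A` satisfy conclusions (1)–(4) of Statement 6. Set `A_K = K ⊗_R A`; then `A_K` is a
finite free `K[X]`-module via `X ↦ 1 ⊗ u`, and the norm `N(f) ∈ K[X]`, i.e. the determinant of
multiplication by `1 ⊗ f` on the `K[X]`-module `A_K`, does not vanish at the points `0` and `1`
of the affine line. -/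
theorem norm_does_not_vanish_at_zero_and_one
    (k : Type) [Field k] [Infinite k]
    -- `R` is a semi-local essentially smooth `k`-algebra which is a domain
    (R : Type) [CommRing R] [IsDomain R] [Algebra k R] [IsNoetherianRing R]
    [Algebra.EssFiniteType k R] [Algebra.FormallySmooth k R]
    (r : ℕ) (p : Fin r → Ideal R) (hp : ∀ i, (p i).IsMaximal)
    (hsemilocal : ∀ m : Ideal R, m.IsMaximal → ∃ i, m = p i)
    -- `K` is the fraction field of `R`
    (K : Type) [Field K] [Algebra R K] [IsFractionRing R K]
    -- `A` is an `R[t]`-algebra (via `ρ`), smooth as an `R`-algebra, finite over `R[t]`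
    (A : Type) [CommRing A] [Algebra R A] [Algebra.Smooth R A]
    (ρ : Polynomial R →+* A) (hρ : ∀ a : R, ρ (Polynomial.C a) = algebraMap R A a)
    (hfinρ : ρ.Finite)
    -- each `A/p_iA` is equi-dimensional of dimension one
    (hequi : ∀ i, ∀ q ∈ minimalPrimes (A ⧸ (p i).map (algebraMap R A)),
      ringKrullDim ((A ⧸ (p i).map (algebraMap R A)) ⧸ q) = 1)
    -- the augmentation and the element `f`
    (ε : A →ₐ[R] R) (f : A) (hf : ε f ≠ 0)
    (hAf : Module.Finite R (A ⧸ Ideal.span ({f} : Set A)))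
    (u : A) :
    letI : Algebra (Polynomial R) A :=
      (Polynomial.aeval u : Polynomial R →ₐ[R] A).toRingHom.toAlgebra
    -- `u` satisfies conclusions (1)–(4) of Statement 6:
    Module.Finite (Polynomial R) A →
    Module.Projective (Polynomial R) A →
    (∃ J : Ideal A, Ideal.span ({u} : Set A) = RingHom.ker ε ⊓ J ∧
      RingHom.ker ε ⊔ J = ⊤ ∧ J ⊔ Ideal.span ({f} : Set A) = ⊤) →
    Ideal.span ({u - 1} : Set A) ⊔ Ideal.span ({f} : Set A) = ⊤ →
    -- the conclusions about `A_K = K ⊗[R] A` as a `K[X]`-module via `X ↦ 1 ⊗ u`: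
    (letI : Algebra (Polynomial K) (TensorProduct R K A) :=
      (Polynomial.aeval ((1 : K) ⊗ₜ[R] u) :
        Polynomial K →ₐ[K] TensorProduct R K A).toRingHom.toAlgebra;
      Module.Finite (Polynomial K) (TensorProduct R K A) ∧
      Module.Free (Polynomial K) (TensorProduct R K A) ∧
      Polynomial.eval (0 : K)
        (LinearMap.det (LinearMap.mulLeft (Polynomial K) ((1 : K) ⊗ₜ[R] f))) ≠ 0 ∧
      Polynomial.eval (1 : K)
        (LinearMap.det (LinearMap.mulLeft (Polynomial K) ((1 : K) ⊗ₜ[R] f))) ≠ 0) := by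
  classical
  letI instSA : Algebra (Polynomial R) A :=
    (Polynomial.aeval u : Polynomial R →ₐ[R] A).toRingHom.toAlgebra
  intro hfin hproj hex h4
  letI instSKT : Algebra (Polynomial K) (TensorProduct R K A) :=
    (Polynomial.aeval ((1 : K) ⊗ₜ[R] u) :
      Polynomial K →ₐ[K] TensorProduct R K A).toRingHom.toAlgebra
  -- scalar towers
  haveI towRSA : IsScalarTower R (Polynomial R) A := by
    refine IsScalarTower.of_algebraMap_eq fun c => ?_
    rw [RingHom.algebraMap_toAlgebra, Polynomial.algebraMap_eq]
    exact (Polynomial.aeval_C u c).symm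
  haveI towKSKT : IsScalarTower K (Polynomial K) (TensorProduct R K A) := by
    refine IsScalarTower.of_algebraMap_eq fun c => ?_
    rw [RingHom.algebraMap_toAlgebra, Polynomial.algebraMap_eq]
    exact (Polynomial.aeval_C _ c).symm
  haveI towRSKT : IsScalarTower R (Polynomial K) (TensorProduct R K A) := by
    refine IsScalarTower.of_algebraMap_eq fun c => ?_
    rw [RingHom.algebraMap_toAlgebra, Polynomial.algebraMap_apply,
      IsScalarTower.algebraMap_apply R K (TensorProduct R K A)]
    exact (Polynomial.aeval_C _ _).symm
  -- the key semilinearity identity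
  have key_smul : ∀ (q : Polynomial R) (a : A),
      (1 : K) ⊗ₜ[R] (q • a)
        = (q.map (algebraMap R K)) • ((1 : K) ⊗ₜ[R] a) := by
    intro q a
    rw [Algebra.smul_def, Algebra.smul_def, RingHom.algebraMap_toAlgebra,
        RingHom.algebraMap_toAlgebra]
    show (1 : K) ⊗ₜ[R] ((Polynomial.aeval u) q * a)
        = (Polynomial.aeval ((1 : K) ⊗ₜ[R] u)) (q.map (algebraMap R K))
            * ((1 : K) ⊗ₜ[R] a)
    rw [Polynomial.aeval_map_algebraMap]
    have h1 : (Polynomial.aeval ((1 : K) ⊗ₜ[R] u)) q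
        = (1 : K) ⊗ₜ[R] ((Polynomial.aeval u) q) := by
      have h2 := Polynomial.aeval_algHom_apply
        (Algebra.TensorProduct.includeRight : A →ₐ[R] TensorProduct R K A) u q
      simpa using h2
    rw [h1, Algebra.TensorProduct.tmul_mul_tmul, one_mul]
  -- finiteness over K[X]
  have hfinT : Module.Finite (Polynomial K) (TensorProduct R K A) := by
    obtain ⟨gens, hgens⟩ := hfin.fg_top
    refine ⟨Submodule.fg_def.mpr ⟨(fun a : A => (1 : K) ⊗ₜ[R] a) '' ↑gens,
      gens.finite_toSet.image _, ?_⟩⟩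
    rw [Submodule.eq_top_iff']
    intro t
    induction t using TensorProduct.induction_on with
    | zero => exact Submodule.zero_mem _
    | add x y hx hy => exact Submodule.add_mem _ hx hy
    | tmul c a =>
      have ha : ∀ b : A, (1 : K) ⊗ₜ[R] b ∈ Submodule.span (Polynomial K)
          ((fun a : A => (1 : K) ⊗ₜ[R] a) '' ↑gens) := by
        intro b
        have hb : b ∈ Submodule.span (Polynomial R) (↑gens : Set A) := by
          rw [hgens]; trivial
        induction hb using Submodule.span_induction with
        | mem x hx => exact Submodule.subset_span ⟨x, hx, rfl⟩
        | zero => rw [TensorProduct.tmul_zero]; exact Submodule.zero_mem _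
        | add x y hx hy hx' hy' => rw [TensorProduct.tmul_add]; exact Submodule.add_mem _ hx' hy'
        | smul q x hx hx' => rw [key_smul]; exact Submodule.smul_mem _ _ hx'
      have hca : c ⊗ₜ[R] a = (Polynomial.C c) • ((1 : K) ⊗ₜ[R] a) := by
        rw [Algebra.smul_def, RingHom.algebraMap_toAlgebra]
        show _ = (Polynomial.aeval ((1 : K) ⊗ₜ[R] u)) (Polynomial.C c) * _
        rw [Polynomial.aeval_C, Algebra.TensorProduct.algebraMap_apply,
          Algebra.TensorProduct.tmul_mul_tmul, one_mul, Algebra.algebraMap_self, RingHom.id_apply,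
          mul_one]
      rw [hca]
      exact Submodule.smul_mem _ _ (ha a)
  -- torsion-freeness over K[X]
  haveI hA_tf : NoZeroSMulDivisors (Polynomial R) A :=
    aux_projective_noZeroSMulDivisors hproj
  haveI hloc : IsLocalizedModule (nonZeroDivisors R) (TensorProduct.mk R K A 1) :=
    (isLocalizedModule_iff_isBaseChange (nonZeroDivisors R) K _).mpr
      (TensorProduct.isBaseChange R A K)
  haveI hsmulcomm : SMulCommClass R (Polynomial K) (TensorProduct R K A) := by
    refine ⟨fun c q z => ?_⟩
    rw [← algebraMap_smul (Polynomial K) c z, ← algebraMap_smul (Polynomial K) c (q • z),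
      smul_smul, smul_smul, mul_comm]
  haveI hnz : NoZeroSMulDivisors (Polynomial K) (TensorProduct R K A) := by
    refine ⟨fun {q t} hqt => ?_⟩
    by_cases hq : q = 0
    · exact Or.inl hq
    refine Or.inr ?_
    obtain ⟨⟨a, s⟩, hsa⟩ :=
      IsLocalizedModule.surj (nonZeroDivisors R) (TensorProduct.mk R K A 1) t
    obtain ⟨b, hb⟩ := IsLocalization.integerNormalization_map_to_map (nonZeroDivisors R) q
    have hq0 : IsLocalization.integerNormalization (nonZeroDivisors R) q ≠ 0 :=
      fun h0 => hq (IsFractionRing.integerNormalization_eq_zero_iff.mp h0)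
    have hzero : TensorProduct.mk R K A 1
        ((IsLocalization.integerNormalization (nonZeroDivisors R) q) • a) = 0 := by
      rw [TensorProduct.mk_apply, key_smul, hb]
      have hsa' : (s : R) • t = (1 : K) ⊗ₜ[R] a := hsa
      haveI := SMulCommClass.symm R (Polynomial K) (TensorProduct R K A)
      rw [← hsa', smul_assoc, smul_comm q ((s : R)) t, hqt, smul_zero, smul_zero]
    obtain ⟨s', hs'⟩ := (IsLocalizedModule.eq_zero_iff (nonZeroDivisors R)
      (TensorProduct.mk R K A 1)).mp hzero
    have hs'' : ((Polynomial.C (s' : R))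
        * IsLocalization.integerNormalization (nonZeroDivisors R) q) • a = 0 := by
      rw [← Polynomial.algebraMap_eq, mul_smul, algebraMap_smul]
      exact hs'
    have ha0 : a = 0 := by
      rcases smul_eq_zero.mp hs'' with h | h
      · exact absurd h (mul_ne_zero
          (Polynomial.C_ne_zero.mpr (nonZeroDivisors.coe_ne_zero s')) hq0)
      · exact h
    have hst : (s : R) • t = 0 := by
      have hsa' : (s : R) • t = (1 : K) ⊗ₜ[R] a := hsa
      rw [hsa', ha0, TensorProduct.tmul_zero]
    have hKs : algebraMap R K (s : R) ≠ 0 :=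
      fun h0 => nonZeroDivisors.coe_ne_zero s (IsFractionRing.injective R K (by simpa using h0))
    rw [← algebraMap_smul K (s : R) t] at hst
    rw [← one_smul K t, ← inv_mul_cancel₀ hKs, mul_smul, hst, smul_zero]
  haveI hfinT' := hfinT
  have hfreeT : Module.Free (Polynomial K) (TensorProduct R K A) :=
    Module.free_of_finite_type_torsion_free'
  -- the key evaluation criterion
  have key : ∀ (c : K),
      (∃ g h : TensorProduct R K A,
        g * ((1 : K) ⊗ₜ[R] f)
          + h * ((1 : K) ⊗ₜ[R] u - algebraMap K (TensorProduct R K A) c) = 1) →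
      Polynomial.eval c (LinearMap.det
        (LinearMap.mulLeft (Polynomial K) ((1 : K) ⊗ₜ[R] f))) ≠ 0 := by
    intro c hc
    obtain ⟨g, h, hgh⟩ := hc
    letI instKc : Algebra (Polynomial K) K :=
      (Polynomial.aeval c : Polynomial K →ₐ[K] K).toRingHom.toAlgebra
    letI : SMul (Polynomial K) (TensorProduct R K A) := instSKT.toSMul
    letI : Module (Polynomial K) (TensorProduct R K A) := instSKT.toModule
    letI : DistribMulAction (Polynomial K) (TensorProduct R K A) :=
      instSKT.toModule.toDistribMulAction
    have hdet := LinearMap.det_baseChange (A := K)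
      (LinearMap.mulLeft (Polynomial K) ((1 : K) ⊗ₜ[R] f))
    rw [RingHom.algebraMap_toAlgebra] at hdet
    -- identify the base-changed map with left multiplication by `1 ⊗ₜ (1 ⊗ₜ f)`
    have hBC : (LinearMap.mulLeft (Polynomial K) ((1 : K) ⊗ₜ[R] f)).baseChange K
        = LinearMap.mulLeft K ((1 : K) ⊗ₜ[Polynomial K] ((1 : K) ⊗ₜ[R] f)) := by
      apply LinearMap.ext
      intro z
      induction z using TensorProduct.induction_on with
      | zero => simp
      | add x y hx hy => simp [hx, hy, mul_add]
      | tmul x y =>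
        rw [LinearMap.baseChange_tmul, LinearMap.mulLeft_apply, LinearMap.mulLeft_apply,
          Algebra.TensorProduct.tmul_mul_tmul, one_mul]
    -- the Bezout relation makes `1 ⊗ₜ (1 ⊗ₜ f)` invertible after base change
    have hone : ((1 : K) ⊗ₜ[Polynomial K] ((1 : K) ⊗ₜ[R] f))
        * ((1 : K) ⊗ₜ[Polynomial K] g) = 1 := by
      rw [Algebra.TensorProduct.tmul_mul_tmul, one_mul]
      have h2 : ((1 : K) ⊗ₜ[R] f) * g
          = 1 - h * ((1 : K) ⊗ₜ[R] u - algebraMap K (TensorProduct R K A) c) := by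
        rw [mul_comm]
        exact eq_sub_of_add_eq hgh
      rw [h2, TensorProduct.tmul_sub]
      have h3 : (1 : K) ⊗ₜ[Polynomial K]
          (h * ((1 : K) ⊗ₜ[R] u - algebraMap K (TensorProduct R K A) c)) = 0 := by
        have h5 : h * ((1 : K) ⊗ₜ[R] u - algebraMap K (TensorProduct R K A) c)
            = (Polynomial.X - Polynomial.C c) • h := by
          rw [Algebra.smul_def, RingHom.algebraMap_toAlgebra]
          show _ = (Polynomial.aeval ((1 : K) ⊗ₜ[R] u)) (Polynomial.X - Polynomial.C c) * h
          rw [map_sub, Polynomial.aeval_X, Polynomial.aeval_C, mul_comm]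
        rw [h5, TensorProduct.tmul_smul, TensorProduct.smul_tmul']
        have h6 : (Polynomial.X - Polynomial.C c) • (1 : K) = 0 := by
          rw [Algebra.smul_def, RingHom.algebraMap_toAlgebra, mul_one]
          show (Polynomial.aeval c) (Polynomial.X - Polynomial.C c) = 0
          rw [map_sub, Polynomial.aeval_X, Polynomial.aeval_C, Algebra.algebraMap_self,
            RingHom.id_apply, sub_self]
        rw [h6, TensorProduct.zero_tmul]
      rw [h3, sub_zero]
      exact (Algebra.TensorProduct.one_def).symm
    have hdet2 : LinearMap.det (LinearMap.mulLeft K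
          ((1 : K) ⊗ₜ[Polynomial K] ((1 : K) ⊗ₜ[R] f)))
        * LinearMap.det (LinearMap.mulLeft K ((1 : K) ⊗ₜ[Polynomial K] g)) = 1 := by
      rw [← LinearMap.det_comp, ← LinearMap.mulLeft_mul, hone,
        LinearMap.mulLeft_one, LinearMap.det_id]
    have hne : LinearMap.det ((LinearMap.mulLeft (Polynomial K)
        ((1 : K) ⊗ₜ[R] f)).baseChange K) ≠ 0 := by
      rw [hBC]
      exact left_ne_zero_of_mul_eq_one hdet2
    rw [hdet] at hne
    simpa [Polynomial.coe_aeval_eq_eval] using hne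
  -- Bezout relation at 0
  have hbez0 : ∃ g h : TensorProduct R K A,
      g * ((1 : K) ⊗ₜ[R] f)
        + h * ((1 : K) ⊗ₜ[R] u - algebraMap K (TensorProduct R K A) (0 : K)) = 1 := by
    obtain ⟨J, hJ, hIJ, hJf⟩ := hex
    -- `algebraMap R A (ε f) ∈ (f, u)` in `A`
    have hspanu : Ideal.span ({u} : Set A) ≤ Ideal.span ({f, u} : Set A) :=
      Ideal.span_mono (by simp)
    have hspanf : Ideal.span ({f} : Set A) ≤ Ideal.span ({f, u} : Set A) :=
      Ideal.span_mono (by simp)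
    have h1 : (1 : A) ∈ RingHom.ker ε ⊔ J := by rw [hIJ]; trivial
    obtain ⟨i, hi, j₀, hj₀, hij⟩ := Submodule.mem_sup.mp h1
    have h2 : (1 : A) ∈ J ⊔ Ideal.span ({f} : Set A) := by rw [hJf]; trivial
    obtain ⟨j, hj, w, hw, hjw⟩ := Submodule.mem_sup.mp h2
    have hiQ : i ∈ Ideal.span ({f, u} : Set A) := by
      have hi2 : i = i * j + i * w := by rw [← mul_add, hjw, mul_one]
      rw [hi2]
      refine Ideal.add_mem _ (hspanu ?_) (Ideal.mul_mem_left _ i (hspanf hw))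
      rw [hJ]
      exact ⟨(RingHom.ker ε).mul_mem_right j hi, J.mul_mem_left i hj⟩
    have hfc : f - algebraMap R A (ε f) ∈ RingHom.ker ε := by
      simp [RingHom.mem_ker]
    have hcj₀ : algebraMap R A (ε f) * j₀ ∈ Ideal.span ({f, u} : Set A) := by
      have h5 : (f - algebraMap R A (ε f)) * j₀ ∈ Ideal.span ({u} : Set A) := by
        rw [hJ]
        exact ⟨(RingHom.ker ε).mul_mem_right j₀ hfc, J.mul_mem_left _ hj₀⟩
      have h6 : algebraMap R A (ε f) * j₀ = f * j₀ - (f - algebraMap R A (ε f)) * j₀ := by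
        ring
      rw [h6]
      exact Submodule.sub_mem _
        (Ideal.mul_mem_right _ _ (Ideal.subset_span (by simp))) (hspanu h5)
    have hQ : algebraMap R A (ε f) ∈ Ideal.span ({f, u} : Set A) := by
      have h7 : algebraMap R A (ε f)
          = algebraMap R A (ε f) * i + algebraMap R A (ε f) * j₀ := by
        rw [← mul_add, hij, mul_one]
      rw [h7]
      exact Ideal.add_mem _ (Ideal.mul_mem_left _ _ hiQ) hcj₀
    -- transport to `K ⊗ A`
    have hmap : (Algebra.TensorProduct.includeRight : A →ₐ[R] TensorProduct R K A)
        (algebraMap R A (ε f)) ∈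
        Ideal.span ({(1 : K) ⊗ₜ[R] f, (1 : K) ⊗ₜ[R] u} : Set (TensorProduct R K A)) := by
      have h8 := Ideal.mem_map_of_mem
        ((Algebra.TensorProduct.includeRight : A →ₐ[R] TensorProduct R K A) :
          A →+* TensorProduct R K A) hQ
      rw [Ideal.map_span] at h8
      simpa [Set.image_insert_eq] using h8
    have hcT : (Algebra.TensorProduct.includeRight : A →ₐ[R] TensorProduct R K A)
        (algebraMap R A (ε f)) = algebraMap K (TensorProduct R K A) (algebraMap R K (ε f)) := by
      rw [AlgHom.commutes, IsScalarTower.algebraMap_apply R K (TensorProduct R K A)]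
    have hKne : algebraMap R K (ε f) ≠ 0 := fun h0 =>
      hf (IsFractionRing.injective R K (by rw [h0, map_zero]))
    have hone : (1 : TensorProduct R K A) ∈
        Ideal.span ({(1 : K) ⊗ₜ[R] f, (1 : K) ⊗ₜ[R] u} : Set (TensorProduct R K A)) := by
      have h9 := Ideal.mul_mem_left _
        (algebraMap K (TensorProduct R K A) (algebraMap R K (ε f))⁻¹) (hcT ▸ hmap)
      rwa [← map_mul, inv_mul_cancel₀ hKne, map_one] at h9
    obtain ⟨g, h, hgh⟩ := Ideal.mem_span_pair.mp hone
    exact ⟨g, h, by rw [map_zero, sub_zero]; exact hgh⟩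
  -- Bezout relation at 1
  have hbez1 : ∃ g h : TensorProduct R K A,
      g * ((1 : K) ⊗ₜ[R] f)
        + h * ((1 : K) ⊗ₜ[R] u - algebraMap K (TensorProduct R K A) (1 : K)) = 1 := by
    have h1 : (1 : A) ∈ Ideal.span ({u - 1} : Set A) ⊔ Ideal.span ({f} : Set A) := by
      rw [h4]; trivial
    obtain ⟨v, hv, w, hw, hvw⟩ := Submodule.mem_sup.mp h1
    obtain ⟨x, hx⟩ := Ideal.mem_span_singleton'.mp hv
    obtain ⟨y, hy⟩ := Ideal.mem_span_singleton'.mp hw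
    refine ⟨(1 : K) ⊗ₜ[R] y, (1 : K) ⊗ₜ[R] x, ?_⟩
    have h2 : (1 : K) ⊗ₜ[R] u - algebraMap K (TensorProduct R K A) (1 : K)
        = (1 : K) ⊗ₜ[R] (u - 1) := by
      rw [map_one, TensorProduct.tmul_sub, Algebra.TensorProduct.one_def]
    rw [h2, Algebra.TensorProduct.tmul_mul_tmul, Algebra.TensorProduct.tmul_mul_tmul,
      one_mul, ← TensorProduct.tmul_add, hx, hy, add_comm, hvw]
    exact Algebra.TensorProduct.one_def.symm
  exact ⟨hfinT, hfreeT, key 0 hbez0, key 1 hbez1⟩
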